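/- Every σ-compact Hausdorff space in which every point is a Gδ set has cardinality at most 2^ℵ₀. -/

import Mathlib

open Set Filter Topology Cardinal

universe u

lemma mk_nat_fun_le_continuum {α : Type u} (h : #α ≤ 𝔠) : #(ℕ → α) ≤ 𝔠 := by
  have e : #(ℕ → α) = #(ULift.{u} ℕ → α) :=
    Cardinal.mk_congr (Equiv.arrowCongr Equiv.ulift.symm (Equiv.refl α))
  rw [e, ← Cardinal.power_def]
  have : #(ULift.{u} ℕ) = (ℵ₀ : Cardinal.{u}) := by simp
  rw [this]
  calc #α ^ (ℵ₀ : Cardinal.{u}) ≤ 𝔠 ^ (ℵ₀ : Cardinal.{u}) := Cardinal.power_le_power_right h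
    _ = 𝔠 := continuum_power_aleph0

lemma mk_closure_le {Y : Type u} [TopologicalSpace Y] [T2Space Y]
    [FirstCountableTopology Y] {A : Set Y} (hA : #A ≤ 𝔠) :
    #(closure A) ≤ 𝔠 := by
  rcases eq_empty_or_nonempty A with rfl | hne
  · simp
  have hseq : ∀ p : closure A, ∃ u : ℕ → Y, (∀ n, u n ∈ A) ∧ Tendsto u atTop (𝓝 (p : Y)) :=
    fun p => mem_closure_iff_seq_limit.mp p.2
  choose u hu hlim using hseq
  have hinj : Function.Injective (fun p : closure A => fun n => (⟨u p n, hu p n⟩ : A)) := by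
    intro p q hpq
    have heq : u p = u q := by
      funext n
      exact congrArg Subtype.val (congrFun hpq n)
    exact Subtype.ext (tendsto_nhds_unique (hlim p) (heq ▸ hlim q))
  exact (mk_le_of_injective hinj).trans (mk_nat_fun_le_continuum hA)

theorem firstCountable_of_compactT2_gdelta {Y : Type u} [TopologicalSpace Y] [CompactSpace Y]
    [T2Space Y] (h : ∀ y : Y, IsGδ ({y} : Set Y)) : FirstCountableTopology Y := by
  constructor
  intro x
  obtain ⟨U, hUo, hxU⟩ := (h x).eq_iInter_nat
  have hxmem : ∀ n, x ∈ U n := by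
    have : x ∈ ⋂ n, U n := hxU ▸ rfl
    exact fun n => mem_iInter.mp this n
  have hV : ∀ n, ∃ V, (V ∈ 𝓝 x ∧ IsClosed V) ∧ V ⊆ U n := fun n =>
    (closed_nhds_basis x).mem_iff.mp ((hUo n).mem_nhds (hxmem n))
  choose V hVmem hVU using hV
  have hVn : ∀ n, V n ∈ 𝓝 x := fun n => (hVmem n).1
  have hVc : ∀ n, IsClosed (V n) := fun n => (hVmem n).2
  have hb : (𝓝 x).HasBasis (fun _ : ℕ => True) (fun n => ⋂ k : Fin (n + 1), V k) := by
    constructor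
    intro U'
    simp only [true_and]
    constructor
    · intro hU'
      obtain ⟨O, hOU', hO, hxO⟩ := mem_nhds_iff.mp hU'
      have hC : IsCompact (Oᶜ) := hO.isClosed_compl.isCompact
      have hcover : Oᶜ ⊆ ⋃ n, (V n)ᶜ := by
        intro y hy
        by_contra hy'
        simp only [mem_iUnion, mem_compl_iff, not_exists, not_not] at hy'
        have hyU : y ∈ ⋂ n, U n := mem_iInter.mpr fun n => hVU n (hy' n)
        rw [← hxU] at hyU
        exact hy (hyU ▸ hxO)
      obtain ⟨t, ht⟩ := hC.elim_finite_subcover (fun n => (V n)ᶜ)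
        (fun n => (hVc n).isOpen_compl) hcover
      refine ⟨t.sup id, fun y hy => ?_⟩
      apply hOU'
      by_contra hyO
      obtain ⟨n, hnt, hn⟩ := mem_iUnion₂.mp (ht hyO)
      have hnle : n ≤ t.sup id := Finset.le_sup (f := id) hnt
      exact hn (mem_iInter.mp hy ⟨n, Nat.lt_succ_of_le hnle⟩)
    · rintro ⟨n, hn⟩
      exact mem_of_superset ((Filter.iInter_mem (s := fun k : Fin (n+1) => V k)).mpr fun k => hVn k) hn
  exact hb.isCountablyGenerated

noncomputable def arhStages {Y : Type u} (step : Set Y → Set Y) :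
    (Cardinal.aleph 1 : Cardinal.{u}).ord.ToType → Set Y :=
  (IsWellFounded.wf (α := (Cardinal.aleph 1 : Cardinal.{u}).ord.ToType) (r := (· < ·))).fix
    (fun i rec => step (⋃ j : {j // j < i}, rec j j.2))

theorem arhStages_eq {Y : Type u} (step : Set Y → Set Y) (i : (Cardinal.aleph 1 : Cardinal.{u}).ord.ToType) :
    arhStages step i = step (⋃ j : {j // j < i}, arhStages step j.1) :=
  WellFounded.fix_eq _ _ _

theorem arh_compact_card {Y : Type u} [TopologicalSpace Y] [CompactSpace Y] [T2Space Y]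
    [FirstCountableTopology Y] : #Y ≤ 𝔠 := by
  classical
  cases isEmpty_or_nonempty Y with
  | inl hE => simp [Cardinal.mk_eq_zero Y]
  | inr hNE =>
  obtain ⟨y₀⟩ := hNE
  -- countable neighborhood bases
  have hbas : ∀ x : Y, ∃ B : ℕ → Set Y, (𝓝 x).HasAntitoneBasis B := fun x =>
    (𝓝 x).exists_antitone_basis
  choose B hB using hbas
  set ι := (Cardinal.aleph 1 : Cardinal.{u}).ord.ToType with hι
  haveI hιne : Nonempty ι := by
    rw [hι, Ordinal.toType_nonempty_iff_ne_zero]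
    simp only [ne_eq, Cardinal.ord_eq_zero]
    exact (Cardinal.aleph_pos 1).ne'
  -- the union and pick functions
  set Uf : (ℕ → Y × ℕ) → Set Y := fun f => ⋃ k, B (f k).1 (f k).2 with hUf
  set pick : (ℕ → Y × ℕ) → Y := fun f =>
    if h : (Uf f)ᶜ.Nonempty then h.some else y₀ with hpickdef
  set step : Set Y → Set Y := fun S =>
    closure (insert y₀ (S ∪ pick '' {f | ∀ k, (f k).1 ∈ S})) with hstepdef
  have hsub : ∀ S : Set Y, S ⊆ step S := fun S =>
    (subset_union_left.trans (subset_insert _ _)).trans subset_closure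
  have hcard : ∀ S : Set Y, #S ≤ 𝔠 → #(step S) ≤ 𝔠 := by
    intro S hS
    apply mk_closure_le
    have hSprod : #(↥S × ℕ) ≤ 𝔠 := by
      rw [Cardinal.mk_prod]
      simp only [Cardinal.mk_nat, Cardinal.lift_aleph0, Cardinal.lift_id]
      calc Cardinal.lift.{0} #↥S * ℵ₀ ≤ 𝔠 * 𝔠 :=
            mul_le_mul' (by rwa [Cardinal.lift_uzero]) Cardinal.aleph0_le_continuum
        _ = 𝔠 := Cardinal.mul_eq_self Cardinal.aleph0_le_continuum
    have hF : #({f : ℕ → Y × ℕ | ∀ k, (f k).1 ∈ S}) ≤ 𝔠 := by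
      have hinj : Function.Injective
          (fun (f : {f : ℕ → Y × ℕ | ∀ k, (f k).1 ∈ S}) (k : ℕ) =>
            ((⟨(f.1 k).1, f.2 k⟩ : S), (f.1 k).2)) := by
        intro f g hfg
        apply Subtype.ext
        funext k
        have h1 : (((⟨(f.1 k).1, f.2 k⟩ : S), (f.1 k).2) : ↥S × ℕ)
            = ((⟨(g.1 k).1, g.2 k⟩ : S), (g.1 k).2) := congrFun hfg k
        obtain ⟨ha', hb⟩ := Prod.ext_iff.mp h1
        exact Prod.ext (congrArg Subtype.val ha') hb
      exact (Cardinal.mk_le_of_injective hinj).trans (mk_nat_fun_le_continuum hSprod)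
    have himg : #(pick '' {f | ∀ k, (f k).1 ∈ S}) ≤ 𝔠 := (Cardinal.mk_image_le).trans hF
    have hunion : #(↥(S ∪ pick '' {f | ∀ k, (f k).1 ∈ S})) ≤ 𝔠 :=
      (Cardinal.mk_union_le _ _).trans <| by
        calc #↥S + #↥(pick '' {f | ∀ k, (f k).1 ∈ S}) ≤ 𝔠 + 𝔠 := add_le_add hS himg
          _ = 𝔠 := Cardinal.add_eq_left Cardinal.aleph0_le_continuum le_rfl
    calc #(↥(insert y₀ (S ∪ pick '' {f | ∀ k, (f k).1 ∈ S})))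
        ≤ #(↥(S ∪ pick '' {f | ∀ k, (f k).1 ∈ S})) + 1 := Cardinal.mk_insert_le
      _ ≤ 𝔠 + 𝔠 := add_le_add hunion (le_trans (by norm_num) Cardinal.aleph0_le_continuum)
      _ = 𝔠 := by
          rw [Cardinal.add_eq_left Cardinal.aleph0_le_continuum le_rfl]
  -- the stages
  set T : ι → Set Y := arhStages step with hT
  have hTeq : ∀ i, T i = step (⋃ j : {j // j < i}, T j.1) := fun i => arhStages_eq step i
  have hmono : ∀ {j i : ι}, j < i → T j ⊆ T i := by
    intro j i hj
    rw [hTeq i]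
    exact (subset_iUnion (fun j' : {j' // j' < i} => T j'.1) ⟨j, hj⟩).trans (hsub _)
  have hTcard : ∀ i, #(T i) ≤ 𝔠 := by
    intro i
    induction i using WellFoundedLT.induction with
    | ind i IH =>
      rw [hTeq i]
      apply hcard
      refine (Cardinal.mk_iUnion_le _).trans ?_
      have h1 : #{j : ι // j < i} ≤ 𝔠 :=
        (Cardinal.mk_Iio_ord_toType i).le.trans Cardinal.aleph_one_le_continuum
      have h2 : ⨆ j : {j : ι // j < i}, #(T j.1) ≤ 𝔠 := by
        cases isEmpty_or_nonempty {j : ι // j < i} with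
        | inl hE => simp [ciSup_of_empty]
        | inr hN => exact ciSup_le' fun j => IH j.1 j.2
      calc #{j : ι // j < i} * ⨆ j : {j : ι // j < i}, #(T j.1) ≤ 𝔠 * 𝔠 := mul_le_mul' h1 h2
        _ = 𝔠 := Cardinal.mul_eq_self Cardinal.aleph0_le_continuum
  have hTclosed : ∀ i, IsClosed (T i) := by
    intro i; rw [hTeq i]; exact isClosed_closure
  have hy₀T : ∀ i, y₀ ∈ T i := by
    intro i; rw [hTeq i]; exact subset_closure (mem_insert _ _)
  set Sset : Set Y := ⋃ i, T i with hSset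
  -- countable families in ι are bounded
  have hbound : ∀ v : ℕ → ι, ∃ i, ∀ n, v n < i := by
    intro v
    haveI : IsWellOrder ι (· < ·) := isWellOrder_lt
    have h1 : #(range v) < Ordinal.cof (Ordinal.type ((· < ·) : ι → ι → Prop)) := by
      rw [Ordinal.type_toType, Cardinal.isRegular_aleph_one.cof_eq]
      haveI : Countable (range v) := countable_range v
      exact (Cardinal.mk_le_aleph0).trans_lt Cardinal.aleph0_lt_aleph_one
    obtain ⟨i, hi⟩ := not_isCofinal_iff.mp (fun hc => not_lt_of_ge (Order.cof_le hc) (by rwa [Ordinal.cof_type] at h1))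
    exact ⟨i, fun n => hi _ (mem_range_self n)⟩
  have hSclosed : IsClosed Sset := by
    rw [← isOpen_compl_iff]
    rw [isOpen_compl_iff]
    refine isClosed_of_closure_subset ?_
    intro p hp
    obtain ⟨v, hv, hvlim⟩ := mem_closure_iff_seq_limit.mp hp
    choose iidx hiidx using fun n => mem_iUnion.mp (hv n)
    obtain ⟨i, hi⟩ := hbound iidx
    have hvT : ∀ n, v n ∈ T i := fun n => hmono (hi n) (hiidx n)
    have : p ∈ closure (T i) := mem_closure_iff_seq_limit.mpr ⟨v, hvT, hvlim⟩
    rw [(hTclosed i).closure_eq] at this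
    exact mem_iUnion.mpr ⟨i, this⟩
  have hScard : #Sset ≤ 𝔠 := by
    refine (Cardinal.mk_iUnion_le T).trans ?_
    have h1 : #ι ≤ 𝔠 := by
      rw [hι, Cardinal.mk_ord_toType]
      exact Cardinal.aleph_one_le_continuum
    have h2 : ⨆ i, #(T i) ≤ 𝔠 := ciSup_le' hTcard
    calc #ι * ⨆ i, #(T i) ≤ 𝔠 * 𝔠 := mul_le_mul' h1 h2
      _ = 𝔠 := Cardinal.mul_eq_self Cardinal.aleph0_le_continuum
  -- Sset is everything
  have hSuniv : Sset = Set.univ := by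
    by_contra hne
    obtain ⟨p, hp⟩ := (ne_univ_iff_exists_notMem _).mp hne
    have hxn : ∀ x : Sset, ∃ n, B (x : Y) n ⊆ {p}ᶜ := by
      intro x
      have hxp : (x : Y) ≠ p := fun h => hp (h ▸ x.2)
      have hmem : {p}ᶜ ∈ 𝓝 (x : Y) := compl_singleton_mem_nhds hxp
      obtain ⟨n, -, hn⟩ := (hB (x : Y)).toHasBasis.mem_iff.mp hmem
      exact ⟨n, hn⟩
    choose nf hnf using hxn
    have hScomp : IsCompact Sset := hSclosed.isCompact
    have hcov : Sset ⊆ ⋃ x : Sset, interior (B (x : Y) (nf x)) := by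
      intro y hy
      refine mem_iUnion.mpr ⟨⟨y, hy⟩, ?_⟩
      exact mem_interior_iff_mem_nhds.mpr ((hB y).toHasBasis.mem_of_mem trivial)
    obtain ⟨t, ht⟩ := hScomp.elim_finite_subcover
      (fun x : Sset => interior (B (x : Y) (nf x))) (fun _ => isOpen_interior) hcov
    have hy₀S : y₀ ∈ Sset := mem_iUnion.mpr ⟨Classical.arbitrary ι, hy₀T _⟩
    have htne : t.Nonempty := by
      obtain ⟨x, hxt, -⟩ := mem_iUnion₂.mp (ht hy₀S)
      exact ⟨x, hxt⟩
    haveI : Nonempty {x // x ∈ t} := ⟨⟨htne.choose, htne.choose_spec⟩⟩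
    obtain ⟨e, he⟩ := exists_surjective_nat {x // x ∈ t}
    set f : ℕ → Y × ℕ := fun k => (((e k : Sset) : Y), nf (e k)) with hf
    have hfexists : ∀ k, ∃ i, (f k).1 ∈ T i := fun k => mem_iUnion.mp (e k).1.2
    choose iidx hiidx using hfexists
    obtain ⟨i, hi⟩ := hbound iidx
    have hfk : f ∈ {g : ℕ → Y × ℕ | ∀ k, (g k).1 ∈ ⋃ j : {j // j < i}, T j.1} :=
      fun k => mem_iUnion.mpr ⟨⟨iidx k, hi k⟩, hiidx k⟩
    have hpickmem : pick f ∈ T i := by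
      rw [hTeq i]
      exact subset_closure (mem_insert_of_mem _ (mem_union_right _ (mem_image_of_mem pick hfk)))
    have hpU : p ∉ Uf f := by
      rw [hUf]
      simp only [mem_iUnion, not_exists]
      intro k hk
      exact hnf (e k) hk rfl
    have hpick : pick f ∉ Uf f := by
      have hne' : (Uf f)ᶜ.Nonempty := ⟨p, hpU⟩
      rw [hpickdef]
      simp only [dif_pos hne']
      exact hne'.some_mem
    apply hpick
    have hmemS : pick f ∈ Sset := mem_iUnion.mpr ⟨i, hpickmem⟩
    obtain ⟨x, hxt, hxmem⟩ := mem_iUnion₂.mp (ht hmemS)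
    obtain ⟨k, hk⟩ := he ⟨x, hxt⟩
    refine mem_iUnion.mpr ⟨k, ?_⟩
    have hBk : B (f k).1 (f k).2 = B (x : Y) (nf x) := by simp only [hf, hk]
    rw [hBk]
    exact interior_subset hxmem
  have hfin : #(↥Sset) = #Y := by rw [hSuniv]; exact Cardinal.mk_univ
  rw [← hfin]
  exact hScard

/-- Every σ-compact Hausdorff space with points Gδ has cardinality at
most 2^ℵ₀. -/
theorem sigmaCompact_pointsGdelta_card (X : Type*) [TopologicalSpace X]
    [SigmaCompactSpace X] [T2Space X] (h : ∀ x : X, IsGδ ({x} : Set X)) :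
    Cardinal.mk X ≤ Cardinal.continuum := by
  classical
  set K : ℕ → Set X := compactCovering X with hK
  have hKcov : ⋃ n, K n = Set.univ := iUnion_compactCovering X
  have hKn : ∀ n : ℕ, #(K n) ≤ 𝔠 := by
    intro n
    haveI : CompactSpace (K n) := isCompact_iff_compactSpace.mp (isCompact_compactCovering X n)
    have hG : ∀ y : K n, IsGδ ({y} : Set (K n)) := by
      intro y
      have h1 : IsGδ ((Subtype.val : K n → X) ⁻¹' {(y : X)}) := by
        obtain ⟨U, hUo, hUeq⟩ := (h (y : X)).eq_iInter_nat
        rw [hUeq, Set.preimage_iInter]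
        exact IsGδ.iInter_of_isOpen fun k => (hUo k).preimage continuous_subtype_val
      have h2 : (Subtype.val : K n → X) ⁻¹' {(y : X)} = {y} := by
        ext z
        simp [Subtype.ext_iff]
      rwa [h2] at h1
    haveI := firstCountable_of_compactT2_gdelta hG
    exact arh_compact_card
  have hcov' : (⋃ i : ULift ℕ, K i.down) = Set.univ := by
    apply Set.eq_univ_of_univ_subset
    rw [← hKcov]
    exact Set.iUnion_subset fun n => Set.subset_iUnion (fun i : ULift ℕ => K i.down) ⟨n⟩
  calc #X = #(Set.univ : Set X) := Cardinal.mk_univ.symm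
    _ = #(⋃ i : ULift ℕ, K i.down) := by rw [hcov']
    _ ≤ #(ULift ℕ) * ⨆ i : ULift ℕ, #(K i.down) := Cardinal.mk_iUnion_le _
    _ ≤ 𝔠 * 𝔠 := by
        refine mul_le_mul' ?_ (ciSup_le' fun i => hKn i.down)
        simp only [Cardinal.mk_uLift, Cardinal.mk_nat, Cardinal.lift_aleph0]
        exact Cardinal.aleph0_le_continuum
    _ = 𝔠 := Cardinal.mul_eq_self Cardinal.aleph0_le_continuum
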